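/- The sequence g defined by g(0) = g(1) = g(2) = 0 and, for n ≥ 3, g(n) = Σ_{i=1}^{n} g(n-i) + Σ_{i=3}^{n-1} (i-2)·2^(n-i-1) + (n-2), satisfies g(n) = (n-2)·2^(n-3) for all n ≥ 3. -/

import Mathlib

lemma lemA' : ∀ m : ℕ, (∑ i ∈ Finset.Icc 3 (m + 2), (i - 2) * 2 ^ (m + 2 - i)) + (m + 2)
    = 2 ^ (m + 1) := by
  intro m
  induction m with
  | zero => simp
  | succ m ih =>
    rw [show m + 1 + 2 = (m + 2) + 1 by ring,
      Finset.sum_Icc_succ_top (by omega : 3 ≤ m + 2 + 1)]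
    have hcong : ∑ i ∈ Finset.Icc 3 (m + 2), (i - 2) * 2 ^ (m + 2 + 1 - i)
        = ∑ i ∈ Finset.Icc 3 (m + 2), 2 * ((i - 2) * 2 ^ (m + 2 - i)) := by
      apply Finset.sum_congr rfl
      intro i hi
      rw [Finset.mem_Icc] at hi
      rw [show m + 2 + 1 - i = (m + 2 - i) + 1 by omega, pow_succ]
      ring
    rw [hcong, ← Finset.mul_sum]
    simp only [show m + 2 + 1 - (m + 2 + 1) = 0 by omega, pow_zero]
    omega

lemma lemC' : ∀ m : ℕ, (∑ k ∈ Finset.Icc 3 (m + 3), (k - 2) * 2 ^ (k - 3))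
    = m * 2 ^ (m + 1) + 1 := by
  intro m
  induction m with
  | zero => simp
  | succ m ih =>
    rw [show m + 1 + 3 = (m + 3) + 1 by ring,
      Finset.sum_Icc_succ_top (by omega : 3 ≤ m + 3 + 1), ih]
    have : m + 3 + 1 - 2 = m + 2 := by omega
    rw [this, show m + 3 + 1 - 3 = m + 1 by omega]
    have h2 : (2:ℕ) ^ (m + 1 + 1) = 2 * 2 ^ (m + 1) := by rw [pow_succ]; ring
    rw [h2]; ring

/-- The full-history recurrence for 132-avoiding permutations with one 123-pattern
has closed form `(n-2)·2^(n-3)`. -/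
theorem stmt4 (g : ℕ → ℕ) (h0 : g 0 = 0) (h1 : g 1 = 0) (h2 : g 2 = 0)
    (hrec : ∀ n, 3 ≤ n → g n = (∑ i ∈ Finset.Icc 1 n, g (n - i)) +
      (∑ i ∈ Finset.Icc 3 (n - 1), (i - 2) * 2 ^ (n - i - 1)) + (n - 2)) :
    ∀ n, 3 ≤ n → g n = (n - 2) * 2 ^ (n - 3) := by
  intro n
  induction n using Nat.strong_induction_on with
  | _ n IH =>
  intro hn
  -- rewrite the history sum as a sum over range n
  have hsum : (∑ i ∈ Finset.Icc 1 n, g (n - i)) = ∑ j ∈ Finset.range n, g j := by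
    rw [← Finset.Ico_add_one_right_eq_Icc, Finset.sum_Ico_eq_sum_range]
    have : ∀ j ∈ Finset.range (n + 1 - 1), g (n - (1 + j)) = g (n - 1 - j) := by
      intro j _; congr 1; omega
    rw [Finset.sum_congr rfl this, show n + 1 - 1 = n by omega,
      Finset.sum_range_reflect]
  have hrange : (∑ j ∈ Finset.range n, g j) = ∑ j ∈ Finset.Icc 3 (n - 1), g j := by
    rw [Finset.range_eq_Ico, ← Finset.sum_Ico_consecutive g (by omega : 0 ≤ 3) (by omega : 3 ≤ n)]
    have h1' : Finset.Ico 3 n = Finset.Icc 3 (n - 1) := by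
      ext x; simp [Finset.mem_Ico, Finset.mem_Icc]; omega
    have h0' : (∑ j ∈ Finset.Ico 0 3, g j) = 0 := by
      simp [Finset.sum_Ico_eq_sum_range, Finset.sum_range_succ, h0, h1, h2]
    rw [h1', h0', zero_add]
  rcases eq_or_lt_of_le hn with h3 | h4
  · -- n = 3
    rw [hrec n hn, hsum, hrange, ← h3]
    simp [Finset.sum_range_succ, h0, h1, h2]
  · -- n ≥ 4
    have h4 : 4 ≤ n := h4
    have hIH : (∑ j ∈ Finset.Icc 3 (n - 1), g j)
        = ∑ j ∈ Finset.Icc 3 (n - 1), (j - 2) * 2 ^ (j - 3) := by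
      apply Finset.sum_congr rfl
      intro j hj
      rw [Finset.mem_Icc] at hj
      exact IH j (by omega) (by omega)
    have hC := lemC' (n - 4)
    rw [show n - 4 + 3 = n - 1 by omega, show n - 4 + 1 = n - 3 by omega] at hC
    have hA := lemA' (n - 3)
    rw [show n - 3 + 2 = n - 1 by omega, show n - 3 + 1 = n - 2 by omega] at hA
    have hexp : ∀ i ∈ Finset.Icc 3 (n - 1), (i - 2) * 2 ^ (n - i - 1)
        = (i - 2) * 2 ^ (n - 1 - i) := by
      intro i hi; rw [Finset.mem_Icc] at hi; congr 2; omega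
    rw [hrec n hn, hsum, hrange, hIH, hC, Finset.sum_congr rfl hexp]
    have hpow : (2:ℕ) ^ (n - 2) = 2 * 2 ^ (n - 3) := by
      rw [← pow_succ']; congr 1; omega
    have hmul : (n - 4) * 2 ^ (n - 3) + 2 ^ (n - 2) = (n - 2) * 2 ^ (n - 3) := by
      rw [hpow, show n - 2 = n - 4 + 2 from by omega, add_mul]
    omega
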